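/- Let G be a finite group, g ∈ G, u, v units of ℤ⟨g⟩, and 𝒩 a subnormal series from ⟨g⟩ to G. Then the central unit construction satisfies c_𝒩(uv) = c_𝒩(u)·c_𝒩(v). -/

import Mathlib

/-- Conjugation `a^h = h⁻¹ a h` of group-ring elements by group elements. -/
noncomputable def conjBy {G : Type*} [Group G] (h : G) (a : MonoidAlgebra ℤ G) :
    MonoidAlgebra ℤ G :=
  MonoidAlgebra.of ℤ G h⁻¹ * a * MonoidAlgebra.of ℤ G h

/-- A subnormal series `⟨g⟩ = N₀ ⊴ N₁ ⊴ ⋯ ⊴ N_len = G`. -/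
structure SubnormalSeries (G : Type*) [Group G] (g : G) where
  len : ℕ
  N : ℕ → Subgroup G
  bot_eq : N 0 = Subgroup.zpowers g
  top_eq : N len = ⊤
  le_succ : ∀ i, N i ≤ N (i + 1)
  conj_mem : ∀ i, ∀ x ∈ N (i + 1), ∀ y ∈ N i, x⁻¹ * y * x ∈ N i

/-- A choice, for each `i`, of a (right) transversal `T i` of `N i` in `N (i+1)`,
recorded as a duplicate-free list. -/
structure TransversalSystem {G : Type*} [Group G] {g : G}
    (S : SubnormalSeries G g) where
  T : ℕ → List G
  nodup : ∀ i, (T i).Nodup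
  mem : ∀ i, ∀ t ∈ T i, t ∈ S.N (i + 1)
  rep : ∀ i, ∀ y ∈ S.N (i + 1), ∃! t, t ∈ T i ∧ y * t⁻¹ ∈ S.N i

/-- The construction `c⁰(u) = u`, `cⁱ(u) = ∏_{h ∈ T i} (cⁱ⁻¹(u))^h`. -/
noncomputable def cSeq {G : Type*} [Group G] {g : G} (S : SubnormalSeries G g)
    (TS : TransversalSystem S) (u : MonoidAlgebra ℤ G) : ℕ → MonoidAlgebra ℤ G
  | 0 => u
  | i + 1 => ((TS.T i).map fun h => conjBy h (cSeq S TS u i)).prod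

section Aux

variable {G : Type*} [Group G]

private lemma of_mul_of (h k : G) :
    MonoidAlgebra.of ℤ G h * MonoidAlgebra.of ℤ G k = MonoidAlgebra.of ℤ G (h * k) :=
  (map_mul (MonoidAlgebra.of ℤ G) h k).symm

private lemma of_inv_mul_of (h : G) :
    MonoidAlgebra.of ℤ G h⁻¹ * MonoidAlgebra.of ℤ G h = 1 := by
  rw [of_mul_of, inv_mul_cancel, map_one]

private lemma of_mul_of_inv (h : G) :
    MonoidAlgebra.of ℤ G h * MonoidAlgebra.of ℤ G h⁻¹ = 1 := by
  rw [of_mul_of, mul_inv_cancel, map_one]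

lemma conjBy_mul (h : G) (a b : MonoidAlgebra ℤ G) :
    conjBy h (a * b) = conjBy h a * conjBy h b := by
  unfold conjBy
  have key : ∀ m : MonoidAlgebra ℤ G,
      MonoidAlgebra.of ℤ G h * (MonoidAlgebra.of ℤ G h⁻¹ * m) = m := by
    intro m; rw [← mul_assoc, of_mul_of_inv, one_mul]
  simp only [mul_assoc, key]

lemma conjBy_one (h : G) : conjBy h 1 = 1 := by
  unfold conjBy
  rw [mul_one, of_inv_mul_of]

lemma conjBy_conjBy (h h' : G) (a : MonoidAlgebra ℤ G) :
    conjBy h' (conjBy h a) = conjBy (h * h') a := by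
  unfold conjBy
  rw [mul_inv_rev, ← of_mul_of h'⁻¹ h⁻¹, ← of_mul_of h h']
  simp only [mul_assoc]

lemma conjBy_list_prod (y : G) (l : List (MonoidAlgebra ℤ G)) :
    conjBy y l.prod = (l.map (conjBy y)).prod := by
  induction l with
  | nil => simpa using conjBy_one y
  | cons a l ih => rw [List.prod_cons, conjBy_mul, ih, List.map_cons, List.prod_cons]

lemma commute_of_conjBy_eq {y : G} {a : MonoidAlgebra ℤ G} (h : conjBy y a = a) :
    Commute (MonoidAlgebra.of ℤ G y) a := by
  have h2 : MonoidAlgebra.of ℤ G y * conjBy y a = a * MonoidAlgebra.of ℤ G y := by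
    unfold conjBy
    rw [← mul_assoc, ← mul_assoc, of_mul_of_inv, one_mul]
  rw [h] at h2
  exact h2

lemma conjBy_eq_of_commute {y : G} {a : MonoidAlgebra ℤ G}
    (h : Commute (MonoidAlgebra.of ℤ G y) a) : conjBy y a = a := by
  unfold conjBy
  rw [mul_assoc, ← h.eq, ← mul_assoc, of_inv_mul_of, one_mul]

/-- If `a` commutes with `of y` for all `y ∈ H` and `b` is supported in `H`,
then `a` and `b` commute. -/
lemma commute_of_suppIn {H : Subgroup G} {a b : MonoidAlgebra ℤ G}
    (ha : ∀ y ∈ H, Commute (MonoidAlgebra.of ℤ G y) a)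
    (hb : ∀ x ∈ b.coeff.support, x ∈ H) : Commute a b := by
  rw [show b = b.coeff.support.sum (fun x => MonoidAlgebra.single x (b.coeff x)) from
    (MonoidAlgebra.sum_coeff_single b).symm]
  refine Commute.sum_right _ _ _ fun x hx => ?_
  have : (MonoidAlgebra.single x (b.coeff x) : MonoidAlgebra ℤ G) = (b.coeff x) • MonoidAlgebra.of ℤ G x := by
    rw [MonoidAlgebra.of_apply]
    rw [MonoidAlgebra.smul_single' (b.coeff x) x 1, mul_one]
  rw [this]
  exact ((ha x (hb x hx)).symm).smul_right _

lemma support_of (h : G) : (MonoidAlgebra.of ℤ G h).coeff.support = {h} := by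
  rw [MonoidAlgebra.of_apply]
  exact Finsupp.support_single_ne_zero h one_ne_zero

lemma suppIn_mul {H : Subgroup G} {a b : MonoidAlgebra ℤ G}
    (ha : ∀ x ∈ a.coeff.support, x ∈ H) (hb : ∀ x ∈ b.coeff.support, x ∈ H) :
    ∀ x ∈ (a * b).coeff.support, x ∈ H := by
  classical
  intro x hx
  obtain ⟨y, hy, z, hz, rfl⟩ := Finset.mem_mul.mp (MonoidAlgebra.support_coeff_mul_subset a b hx)
  exact H.mul_mem (ha y hy) (hb z hz)

lemma suppIn_conjBy {H : Subgroup G} {h : G}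
    (hc : ∀ y ∈ H, h⁻¹ * y * h ∈ H) {a : MonoidAlgebra ℤ G}
    (ha : ∀ x ∈ a.coeff.support, x ∈ H) :
    ∀ x ∈ (conjBy h a).coeff.support, x ∈ H := by
  classical
  intro x hx
  unfold conjBy at hx
  obtain ⟨y, hy, z, hz, rfl⟩ := Finset.mem_mul.mp (MonoidAlgebra.support_coeff_mul_subset _ _ hx)
  obtain ⟨p, hp, q, hq, rfl⟩ := Finset.mem_mul.mp (MonoidAlgebra.support_coeff_mul_subset _ _ hy)
  rw [support_of, Finset.mem_singleton] at hp hz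
  subst hp; subst hz
  exact hc q (ha q hq)

lemma suppIn_one {H : Subgroup G} : ∀ x ∈ (1 : MonoidAlgebra ℤ G).coeff.support, x ∈ H := by
  intro x hx
  rw [MonoidAlgebra.support_coeff_one, Finset.mem_one] at hx
  subst hx; exact H.one_mem

lemma suppIn_list_prod {H : Subgroup G} {l : List (MonoidAlgebra ℤ G)}
    (h : ∀ a ∈ l, ∀ x ∈ a.coeff.support, x ∈ H) :
    ∀ x ∈ l.prod.coeff.support, x ∈ H := by
  induction l with
  | nil => simpa using suppIn_one
  | cons a l ih =>
    rw [List.prod_cons]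
    exact suppIn_mul (h a (List.mem_cons_self))
      (ih fun b hb => h b (List.mem_cons_of_mem a hb))

/-- key commuting lemma for conjugated factors -/
lemma commute_conj_conj {H K : Subgroup G}
    (hconj : ∀ x ∈ K, ∀ y ∈ H, x⁻¹ * y * x ∈ H)
    {a b : MonoidAlgebra ℤ G}
    (hainv : ∀ y ∈ H, conjBy y a = a)
    (hbsupp : ∀ x ∈ b.coeff.support, x ∈ H)
    {h h' : G} (hh : h ∈ K) (hh' : h' ∈ K) :
    Commute (conjBy h a) (conjBy h' b) := by
  set b' : MonoidAlgebra ℤ G := conjBy (h' * h⁻¹) b with hb'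
  have hmem : h' * h⁻¹ ∈ K := K.mul_mem hh' (K.inv_mem hh)
  have hb'supp : ∀ x ∈ b'.coeff.support, x ∈ H :=
    suppIn_conjBy (fun y hy => hconj _ hmem y hy) hbsupp
  have hab' : Commute a b' :=
    commute_of_suppIn (fun y hy => commute_of_conjBy_eq (hainv y hy)) hb'supp
  have key : conjBy h' b = conjBy h b' := by
    rw [hb', conjBy_conjBy, mul_assoc, inv_mul_cancel, mul_one]
  rw [key]
  show conjBy h a * conjBy h b' = conjBy h b' * conjBy h a
  rw [← conjBy_mul, ← conjBy_mul, hab'.eq]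

lemma prod_map_mul {M : Type*} [Monoid M] (T : List G) (f g : G → M)
    (hc : ∀ h ∈ T, ∀ h' ∈ T, Commute (f h) (g h')) :
    (T.map fun h => f h * g h).prod = (T.map f).prod * (T.map g).prod := by
  induction T with
  | nil => simp
  | cons h T ih =>
    simp only [List.map_cons, List.prod_cons]
    rw [ih fun a ha b hb => hc a (List.mem_cons_of_mem h ha) b (List.mem_cons_of_mem h hb)]
    have hcomm : Commute (g h) (T.map f).prod := by
      refine Commute.list_prod_right _ _ fun x hx => ?_
      obtain ⟨a, ha, rfl⟩ := List.mem_map.mp hx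
      exact (hc a (List.mem_cons_of_mem h ha) h (List.mem_cons_self)).symm
    calc f h * g h * ((T.map f).prod * (T.map g).prod)
        = f h * (g h * (T.map f).prod) * (T.map g).prod := by simp only [mul_assoc]
      _ = f h * ((T.map f).prod * g h) * (T.map g).prod := by rw [hcomm.eq]
      _ = f h * (T.map f).prod * (g h * (T.map g).prod) := by simp only [mul_assoc]

end Aux

section Main

variable {G : Type*} [Group G] {g : G}

/-- Support and invariance properties of `cSeq` at every level. -/
lemma cSeq_props (S : SubnormalSeries G g) (TS : TransversalSystem S)
    (u : MonoidAlgebra ℤ G) (hsupp : ∀ x ∈ u.coeff.support, x ∈ S.N 0) :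
    ∀ i, (∀ x ∈ (cSeq S TS u i).coeff.support, x ∈ S.N i) ∧
      (∀ y ∈ S.N i, conjBy y (cSeq S TS u i) = cSeq S TS u i) := by
  intro i
  induction i with
  | zero =>
    refine ⟨hsupp, fun y hy => ?_⟩
    refine conjBy_eq_of_commute (commute_of_suppIn ?_ hsupp)
    intro z hz
    -- z, y ∈ zpowers g, so of z and of y commute; we need Commute (of z) (of y)?? no:
    -- we need ∀ z ∈ N 0, Commute (of z) (of y). Both in zpowers g.
    rw [S.bot_eq] at hy hz
    obtain ⟨m, rfl⟩ := Subgroup.mem_zpowers_iff.mp hy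
    obtain ⟨n, rfl⟩ := Subgroup.mem_zpowers_iff.mp hz
    have hc : (g ^ n) * (g ^ m) = (g ^ m) * (g ^ n) := ((Commute.refl g).zpow_zpow n m).eq
    show MonoidAlgebra.of ℤ G (g ^ n) * MonoidAlgebra.of ℤ G (g ^ m)
        = MonoidAlgebra.of ℤ G (g ^ m) * MonoidAlgebra.of ℤ G (g ^ n)
    rw [of_mul_of, of_mul_of, hc]
  | succ i ih =>
    obtain ⟨ihsupp, ihinv⟩ := ih
    set a := cSeq S TS u i with ha
    have hfactor : ∀ h ∈ TS.T i, ∀ x ∈ (conjBy h a).coeff.support, x ∈ S.N (i + 1) := by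
      intro h hh
      refine suppIn_conjBy (fun y hy => ?_) (fun x hx => S.le_succ i (ihsupp x hx))
      exact S.N (i+1) |>.mul_mem (S.N (i+1) |>.mul_mem
        (S.N (i+1) |>.inv_mem (TS.mem i h hh)) hy) (TS.mem i h hh)
    constructor
    · show ∀ x ∈ (((TS.T i).map fun h => conjBy h a).prod).coeff.support, x ∈ S.N (i + 1)
      refine suppIn_list_prod fun b hb => ?_
      obtain ⟨h, hh, rfl⟩ := List.mem_map.mp hb
      exact hfactor h hh
    · intro y hy
      show conjBy y (((TS.T i).map fun h => conjBy h a).prod)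
          = ((TS.T i).map fun h => conjBy h a).prod
      rw [conjBy_list_prod, List.map_map]
      -- define σ : the permutation of T i induced by right multiplication by y
      classical
      set T := TS.T i with hT
      have hTmem : ∀ h ∈ T, h ∈ S.N (i + 1) := TS.mem i
      have hmuly : ∀ h ∈ T, h * y ∈ S.N (i + 1) := fun h hh =>
        (S.N (i+1)).mul_mem (hTmem h hh) hy
      -- σ h is the unique representative of h * y
      let σ : G → G := fun h =>
        if hh : h * y ∈ S.N (i + 1) then (TS.rep i (h * y) hh).choose else h
      have hσ : ∀ h ∈ T, σ h ∈ T ∧ h * y * (σ h)⁻¹ ∈ S.N i := by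
        intro h hh
        have hm := hmuly h hh
        simp only [σ, dif_pos hm]
        exact (TS.rep i (h * y) hm).choose_spec.1
      have hσuniq : ∀ h ∈ T, ∀ t, (t ∈ T ∧ h * y * t⁻¹ ∈ S.N i) → t = σ h := by
        intro h hh t ht
        have hm := hmuly h hh
        simp only [σ, dif_pos hm]
        exact (TS.rep i (h * y) hm).choose_spec.2 t ht
      -- uniqueness of representatives within T
      have huniqT : ∀ h ∈ T, ∀ h' ∈ T, h' * h⁻¹ ∈ S.N i → h' = h := by
        intro h hh h' hh' hmem
        have h1 := (TS.rep i h' (hTmem h' hh')).choose_spec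
        have e1 : h' = (TS.rep i h' (hTmem h' hh')).choose :=
          h1.2 h' ⟨hh', by rw [mul_inv_cancel]; exact (S.N i).one_mem⟩
        have e2 : h = (TS.rep i h' (hTmem h' hh')).choose := h1.2 h ⟨hh, hmem⟩
        rw [e1, e2]
      -- each factor transforms via σ
      have hcongr : ∀ h ∈ T, conjBy y (conjBy h a) = conjBy (σ h) a := by
        intro h hh
        obtain ⟨hσT, hσN⟩ := hσ h hh
        rw [conjBy_conjBy]
        have : conjBy (σ h) (conjBy (h * y * (σ h)⁻¹) a) = conjBy (h * y) a := by
          rw [conjBy_conjBy, mul_assoc, inv_mul_cancel, mul_one]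
        rw [← this, ihinv _ hσN]
      -- T.map σ is a permutation of T
      have hσinj : ∀ x ∈ T, ∀ x' ∈ T, σ x = σ x' → x = x' := by
        intro x hx x' hx' he
        obtain ⟨_, h1⟩ := hσ x hx
        obtain ⟨_, h2⟩ := hσ x' hx'
        rw [he] at h1
        have : x' * x⁻¹ = (x' * y * (σ x')⁻¹) * (x * y * (σ x')⁻¹)⁻¹ := by
          group
        have hmem : x' * x⁻¹ ∈ S.N i := by
          rw [this]; exact (S.N i).mul_mem h2 ((S.N i).inv_mem h1)
        exact (huniqT x hx x' hx' hmem).symm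
      have hperm : T.map σ |>.Perm T := by
        refine (List.perm_ext_iff_of_nodup (List.Nodup.map_on hσinj (TS.nodup i))
          (TS.nodup i)).mpr fun t => ?_
        constructor
        · intro ht
          obtain ⟨h, hh, rfl⟩ := List.mem_map.mp ht
          exact (hσ h hh).1
        · intro ht
          -- surjectivity: find h with σ h = t
          have hz : t * y⁻¹ ∈ S.N (i + 1) :=
            (S.N (i+1)).mul_mem (hTmem t ht) ((S.N (i+1)).inv_mem hy)
          obtain ⟨h, ⟨hhT, hhN⟩, _⟩ := TS.rep i (t * y⁻¹) hz
          have : h * y * t⁻¹ ∈ S.N i := by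
            have := (S.N i).inv_mem hhN
            simpa [mul_assoc] using this
          have he : t = σ h := hσuniq h hhT t ⟨ht, this⟩
          exact List.mem_map.mpr ⟨h, hhT, he.symm⟩
      simp only [Function.comp_def]
      rw [List.map_congr_left (fun h hh => hcongr h hh)]
      have heq : T.map (fun h => conjBy (σ h) a) = (T.map σ).map (fun h => conjBy h a) := by
        rw [List.map_map]; rfl
      rw [heq]
      refine (hperm.map (fun h => conjBy h a)).prod_eq' ?_
      refine List.pairwise_of_forall_mem_list fun b hb c hc => ?_
      obtain ⟨h1, hh1, rfl⟩ := List.mem_map.mp hb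
      obtain ⟨h2, hh2, rfl⟩ := List.mem_map.mp hc
      exact commute_conj_conj (S.conj_mem i) ihinv ihsupp
        (hTmem h1 (hperm.mem_iff.mp hh1)) (hTmem h2 (hperm.mem_iff.mp hh2))

end Main

theorem cSeq_mul {G : Type*} [Group G] [Fintype G] (g : G)
    (S : SubnormalSeries G g) (TS : TransversalSystem S)
    (u v : MonoidAlgebra ℤ G) (hu : IsUnit u) (hv : IsUnit v)
    (husupp : (u.coeff.support : Set G) ⊆ (Subgroup.zpowers g : Subgroup G))
    (hvsupp : (v.coeff.support : Set G) ⊆ (Subgroup.zpowers g : Subgroup G)) :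
    cSeq S TS (u * v) S.len = cSeq S TS u S.len * cSeq S TS v S.len := by
  have hus : ∀ x ∈ u.coeff.support, x ∈ S.N 0 := by
    intro x hx; rw [S.bot_eq]; exact husupp hx
  have hvs : ∀ x ∈ v.coeff.support, x ∈ S.N 0 := by
    intro x hx; rw [S.bot_eq]; exact hvsupp hx
  have huvs : ∀ x ∈ (u * v).coeff.support, x ∈ S.N 0 := suppIn_mul hus hvs
  suffices h : ∀ i, cSeq S TS (u * v) i = cSeq S TS u i * cSeq S TS v i from h S.len
  intro i
  induction i with
  | zero => rfl
  | succ i ih =>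
    obtain ⟨hsuppu, hinvu⟩ := cSeq_props S TS u hus i
    obtain ⟨hsuppv, hinvv⟩ := cSeq_props S TS v hvs i
    show ((TS.T i).map fun h => conjBy h (cSeq S TS (u * v) i)).prod = _
    have e1 : ((TS.T i).map fun h => conjBy h (cSeq S TS (u * v) i))
        = (TS.T i).map fun h => conjBy h (cSeq S TS u i) * conjBy h (cSeq S TS v i) := by
      refine List.map_congr_left fun h hh => ?_
      rw [ih, conjBy_mul]
    rw [e1, prod_map_mul]
    · rfl
    · intro h hh h' hh'
      exact commute_conj_conj (S.conj_mem i) hinvu hsuppv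
        (TS.mem i h hh) (TS.mem i h' hh')
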